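/- Let X ⊂ ℝ^p and Y ⊂ ℝ^q be compact sets and fix ε > 0. Let β_h (h ∈ ℕ) and β be nonzero finite positive Radon measures on Y with β_h converging weakly to β; let g_h, g ∈ C(Y) with g_h → g uniformly on Y; and let M_h, M ∈ ℝ^{q×p} with M_h → M. Define the barycentric maps T_h(x) = [∫_Y y·exp((g_h(y) + ⟨M_h x, y⟩)/ε) dβ_h(y)] / [∫_Y exp((g_h(y) + ⟨M_h x, y⟩)/ε) dβ_h(y)] and T(x) analogously with (g, M, β). Then T_h(x) → T(x) for every x ∈ X, ‖T_h(x)‖ ≤ max_{y∈Y} ‖y‖ for all h and x, and consequently T_h → T in L²(μ; ℝ^q) for every finite positive measure μ on X. -/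

import Mathlib

open MeasureTheory Filter Set
open scoped ENNReal NNReal

noncomputable section

/-- A matrix acting as a linear map between Euclidean spaces. -/
def mv {p q : ℕ} (M : Matrix (Fin q) (Fin p) ℝ) (x : EuclideanSpace ℝ (Fin p)) :
    EuclideanSpace ℝ (Fin q) := WithLp.toLp 2 (fun i => ∑ j, M i j * x j)

/-- The entropic barycentric map
`T(x) = (∫ y e^{(g(y)+⟨Mx,y⟩)/ε} dβ(y)) / (∫ e^{(g(y)+⟨Mx,y⟩)/ε} dβ(y))`. -/
def baryMap {p q : ℕ} (ε : ℝ) (g : EuclideanSpace ℝ (Fin q) → ℝ)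
    (M : Matrix (Fin q) (Fin p) ℝ) (β : Measure (EuclideanSpace ℝ (Fin q)))
    (x : EuclideanSpace ℝ (Fin p)) : EuclideanSpace ℝ (Fin q) :=
  (∫ y, Real.exp ((g y + (inner ℝ (mv M x) y : ℝ)) / ε) ∂β)⁻¹ •
    ∫ y, Real.exp ((g y + (inner ℝ (mv M x) y : ℝ)) / ε) • y ∂β

/- ### Auxiliary lemmas -/

lemma euclid_coord_le {n : ℕ} (x : EuclideanSpace ℝ (Fin n)) (j : Fin n) : |x j| ≤ ‖x‖ := by
  rw [EuclideanSpace.norm_eq, ← Real.sqrt_sq_eq_abs]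
  apply Real.sqrt_le_sqrt
  have := Finset.single_le_sum (f := fun i => ‖x i‖ ^ 2) (fun i _ => sq_nonneg _)
    (Finset.mem_univ j)
  simpa [Real.norm_eq_abs, sq_abs] using this

lemma tendsto_euclid {n : ℕ} {u : ℕ → EuclideanSpace ℝ (Fin n)} {a : EuclideanSpace ℝ (Fin n)}
    (h : ∀ i, Tendsto (fun k => u k i) atTop (nhds (a i))) : Tendsto u atTop (nhds a) := by
  let e := PiLp.continuousLinearEquiv 2 ℝ (fun _ : Fin n => ℝ)
  have h1 : Tendsto (fun k => e (u k)) atTop (nhds (e a)) := tendsto_pi_nhds.2 h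
  have h2 := ((e.symm.continuous.tendsto (e a)).comp h1)
  simpa [e, Function.comp_def] using h2

lemma integrable_of_cpt {n : ℕ} {Y : Set (EuclideanSpace ℝ (Fin n))} (hY : IsCompact Y)
    {V : Type*} [NormedAddCommGroup V]
    (κ : Measure (EuclideanSpace ℝ (Fin n))) [IsFiniteMeasure κ] (hκ : κ Yᶜ = 0)
    {f : EuclideanSpace ℝ (Fin n) → V} (hf : Continuous f) : Integrable f κ := by
  obtain ⟨C, hC⟩ := hY.exists_bound_of_continuousOn hf.continuousOn
  refine ⟨hf.aestronglyMeasurable, HasFiniteIntegral.of_bounded (C := C) ?_⟩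
  filter_upwards [(mem_ae_iff.mpr hκ : ∀ᵐ y ∂κ, y ∈ Y)] with y hy
  exact hC y hy

lemma norm_bound_on_cpt {n : ℕ} {Y : Set (EuclideanSpace ℝ (Fin n))} (hY : IsCompact Y) :
    ∃ R : ℝ, 0 ≤ R ∧ ∀ y ∈ Y, ‖y‖ ≤ R := by
  obtain ⟨R₀, hR₀⟩ := hY.exists_bound_of_continuousOn continuous_id.continuousOn
  exact ⟨max R₀ 0, le_max_right _ _, fun y hy => le_trans (hR₀ y hy) (le_max_left _ _)⟩

lemma mv_cont {p q : ℕ} (M : Matrix (Fin q) (Fin p) ℝ) : Continuous (mv M) := by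
  have h : Continuous fun (x : EuclideanSpace ℝ (Fin p)) =>
      (fun i => ∑ j, M i j * x j : Fin q → ℝ) :=
    continuous_pi fun i => continuous_finset_sum _ fun j _ =>
      continuous_const.mul (EuclideanSpace.proj (𝕜 := ℝ) j).continuous
  exact (PiLp.continuous_toLp 2 (fun _ : Fin q => ℝ)).comp h

lemma inner_mv_le {p q : ℕ} (M : Matrix (Fin q) (Fin p) ℝ) (x : EuclideanSpace ℝ (Fin p))
    (y : EuclideanSpace ℝ (Fin q)) :
    |(inner ℝ (mv M x) y : ℝ)| ≤ (∑ i, ∑ j, |M i j|) * (‖x‖ * ‖y‖) := by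
  have h1 : (inner ℝ (mv M x) y : ℝ) = ∑ i, (∑ j, M i j * x j) * y i := by
    simp [PiLp.inner_apply, RCLike.inner_apply, mv]; exact Finset.sum_congr rfl fun _ _ => mul_comm _ _
  rw [h1]
  calc |∑ i, (∑ j, M i j * x j) * y i| ≤ ∑ i, |(∑ j, M i j * x j) * y i| :=
        Finset.abs_sum_le_sum_abs _ _
    _ ≤ ∑ i, ∑ j, |M i j| * (‖x‖ * ‖y‖) := by
        refine Finset.sum_le_sum fun i _ => ?_
        rw [abs_mul]
        calc |∑ j, M i j * x j| * |y i| ≤ (∑ j, |M i j * x j|) * |y i| := by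
              apply mul_le_mul_of_nonneg_right (Finset.abs_sum_le_sum_abs _ _) (abs_nonneg _)
          _ ≤ (∑ j, |M i j| * ‖x‖) * ‖y‖ := by
              apply mul_le_mul
              · refine Finset.sum_le_sum fun j _ => ?_
                rw [abs_mul]
                exact mul_le_mul_of_nonneg_left (euclid_coord_le x j) (abs_nonneg _)
              · exact euclid_coord_le y i
              · exact abs_nonneg _
              · exact Finset.sum_nonneg fun j _ => by positivity
          _ = ∑ j, |M i j| * (‖x‖ * ‖y‖) := by
              rw [Finset.sum_mul]; exact Finset.sum_congr rfl fun j _ => by ring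
    _ = (∑ i, ∑ j, |M i j|) * (‖x‖ * ‖y‖) := by
        rw [Finset.sum_mul]; congr 1; ext i; rw [Finset.sum_mul]

lemma integrand_cont {p q : ℕ} (ε : ℝ) {g : EuclideanSpace ℝ (Fin q) → ℝ} (hg : Continuous g)
    (M : Matrix (Fin q) (Fin p) ℝ) (x : EuclideanSpace ℝ (Fin p)) :
    Continuous fun y : EuclideanSpace ℝ (Fin q) =>
      Real.exp ((g y + (inner ℝ (mv M x) y : ℝ)) / ε) :=
  Real.continuous_exp.comp ((hg.add (continuous_const.inner continuous_id)).div_const ε)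

lemma denom_pos {p q : ℕ} {Y : Set (EuclideanSpace ℝ (Fin q))} (hY : IsCompact Y)
    (ε : ℝ) {g : EuclideanSpace ℝ (Fin q) → ℝ} (hg : Continuous g)
    (M : Matrix (Fin q) (Fin p) ℝ) (κ : Measure (EuclideanSpace ℝ (Fin q)))
    [IsFiniteMeasure κ] (hκne : κ ≠ 0) (hκsupp : κ Yᶜ = 0) (x : EuclideanSpace ℝ (Fin p)) :
    0 < ∫ y, Real.exp ((g y + (inner ℝ (mv M x) y : ℝ)) / ε) ∂κ := by
  rw [integral_pos_iff_support_of_nonneg (fun y => (Real.exp_pos _).le)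
    (integrable_of_cpt hY κ hκsupp (integrand_cont ε hg M x))]
  have : (Function.support fun y => Real.exp ((g y + (inner ℝ (mv M x) y : ℝ)) / ε)) = univ := by
    ext y; simp [Function.mem_support, (Real.exp_pos _).ne']
  rw [this]
  exact Measure.measure_univ_pos.mpr hκne

lemma bary_bound {p q : ℕ} {Y : Set (EuclideanSpace ℝ (Fin q))} (hY : IsCompact Y)
    (ε : ℝ) {g : EuclideanSpace ℝ (Fin q) → ℝ} (hg : Continuous g)
    (M : Matrix (Fin q) (Fin p) ℝ) (κ : Measure (EuclideanSpace ℝ (Fin q)))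
    [IsFiniteMeasure κ] (hκne : κ ≠ 0) (hκsupp : κ Yᶜ = 0) (x : EuclideanSpace ℝ (Fin p)) :
    ‖baryMap ε g M κ x‖ ≤ sSup ((fun y => ‖y‖) '' Y) := by
  have hYne : Y.Nonempty := by
    by_contra hn
    rw [not_nonempty_iff_eq_empty] at hn
    subst hn
    simp only [compl_empty] at hκsupp
    exact hκne (Measure.measure_univ_eq_zero.mp hκsupp)
  set R := sSup ((fun y => ‖y‖) '' Y) with hRdef
  have hbdd : BddAbove ((fun y => ‖y‖) '' Y) := (hY.image continuous_norm).bddAbove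
  have hR : ∀ y ∈ Y, ‖y‖ ≤ R := fun y hy => le_csSup hbdd ⟨y, hy, rfl⟩
  obtain ⟨y₀, hy₀⟩ := hYne
  have hR0 : 0 ≤ R := le_trans (norm_nonneg y₀) (hR y₀ hy₀)
  set d := ∫ y, Real.exp ((g y + (inner ℝ (mv M x) y : ℝ)) / ε) ∂κ with hddef
  have hd : 0 < d := denom_pos hY ε hg M κ hκne hκsupp x
  set N := ∫ y, Real.exp ((g y + (inner ℝ (mv M x) y : ℝ)) / ε) • y ∂κ with hNdef
  have haeY : ∀ᵐ y ∂κ, y ∈ Y := mem_ae_iff.mpr hκsupp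
  have hcont := integrand_cont ε hg M x
  have h1 : ‖N‖ ≤ ∫ y, Real.exp ((g y + (inner ℝ (mv M x) y : ℝ)) / ε) * ‖y‖ ∂κ := by
    refine (norm_integral_le_integral_norm _).trans_eq ?_
    refine integral_congr_ae (ae_of_all _ fun y => ?_)
    simp only [norm_smul, Real.norm_eq_abs, abs_of_pos (Real.exp_pos _)]
  have h2 : ∫ y, Real.exp ((g y + (inner ℝ (mv M x) y : ℝ)) / ε) * ‖y‖ ∂κ
      ≤ ∫ y, Real.exp ((g y + (inner ℝ (mv M x) y : ℝ)) / ε) * R ∂κ := by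
    refine integral_mono_ae (integrable_of_cpt hY κ hκsupp (hcont.mul continuous_norm))
      ((integrable_of_cpt hY κ hκsupp hcont).mul_const R) ?_
    filter_upwards [haeY] with y hy
    exact mul_le_mul_of_nonneg_left (hR y hy) (Real.exp_pos _).le
  have h3 : ∫ y, Real.exp ((g y + (inner ℝ (mv M x) y : ℝ)) / ε) * R ∂κ = d * R :=
    integral_mul_const _ _
  have hN : ‖N‖ ≤ d * R := h1.trans (h2.trans_eq h3)
  show ‖d⁻¹ • N‖ ≤ R
  rw [norm_smul, Real.norm_eq_abs, abs_of_pos (inv_pos.mpr hd)]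
  calc d⁻¹ * ‖N‖ ≤ d⁻¹ * (d * R) := by gcongr
    _ = R := by field_simp

lemma cont_denom {p q : ℕ} {Y : Set (EuclideanSpace ℝ (Fin q))} (hY : IsCompact Y)
    {ε : ℝ} (hε : 0 < ε) {g : EuclideanSpace ℝ (Fin q) → ℝ} (hg : Continuous g)
    (M : Matrix (Fin q) (Fin p) ℝ) (κ : Measure (EuclideanSpace ℝ (Fin q)))
    [IsFiniteMeasure κ] (hκsupp : κ Yᶜ = 0) :
    Continuous (fun x : EuclideanSpace ℝ (Fin p) =>
      ∫ y, Real.exp ((g y + (inner ℝ (mv M x) y : ℝ)) / ε) ∂κ) ∧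
    Continuous (fun x : EuclideanSpace ℝ (Fin p) =>
      ∫ y, Real.exp ((g y + (inner ℝ (mv M x) y : ℝ)) / ε) • y ∂κ) := by
  obtain ⟨G, hG⟩ := hY.exists_bound_of_continuousOn hg.continuousOn
  obtain ⟨R, hR0, hR⟩ := norm_bound_on_cpt hY
  set cM : ℝ := ∑ i, ∑ j, |M i j| with hcM
  have hcM0 : 0 ≤ cM := Finset.sum_nonneg fun i _ => Finset.sum_nonneg fun j _ => abs_nonneg _
  have hG0 : 0 ≤ max G 0 := le_max_right _ _
  have haeY : ∀ᵐ y ∂κ, y ∈ Y := mem_ae_iff.mpr hκsupp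
  have key : ∀ x₀ : EuclideanSpace ℝ (Fin p), ∀ᶠ x in nhds x₀, ∀ᵐ y ∂κ,
      Real.exp ((g y + (inner ℝ (mv M x) y : ℝ)) / ε)
        ≤ Real.exp ((max G 0 + cM * ((‖x₀‖ + 1) * R)) / ε) := by
    intro x₀
    filter_upwards [Metric.ball_mem_nhds x₀ one_pos] with x hx
    filter_upwards [haeY] with y hy
    rw [Real.exp_le_exp]
    have hx' : ‖x‖ ≤ ‖x₀‖ + 1 := by
      have h1 : ‖x - x₀‖ < 1 := by rwa [mem_ball_iff_norm] at hx
      have h2 := norm_sub_norm_le x x₀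
      linarith
    have hgb : g y ≤ max G 0 := le_trans (le_abs_self _)
      (le_trans (hG y hy) (le_max_left _ _))
    have hinner : (inner ℝ (mv M x) y : ℝ) ≤ cM * ((‖x₀‖ + 1) * R) := by
      refine le_trans (le_abs_self _) (le_trans (inner_mv_le M x y) ?_)
      have : ‖x‖ * ‖y‖ ≤ (‖x₀‖ + 1) * R :=
        mul_le_mul hx' (hR y hy) (norm_nonneg _) (by positivity)
      exact mul_le_mul_of_nonneg_left this hcM0
    have : g y + (inner ℝ (mv M x) y : ℝ) ≤ max G 0 + cM * ((‖x₀‖ + 1) * R) := by linarith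
    exact div_le_div_of_nonneg_right this (le_of_lt hε) |>.trans_eq rfl
  constructor
  · rw [continuous_iff_continuousAt]
    intro x₀
    apply continuousAt_of_dominated (bound := fun _ =>
      Real.exp ((max G 0 + cM * ((‖x₀‖ + 1) * R)) / ε))
    · exact Eventually.of_forall fun x => (integrand_cont ε hg M x).aestronglyMeasurable
    · filter_upwards [key x₀] with x hx
      filter_upwards [hx] with y hy
      rwa [Real.norm_eq_abs, abs_of_pos (Real.exp_pos _)]
    · exact integrable_const _
    · refine ae_of_all _ fun y => ?_
      have : Continuous fun x : EuclideanSpace ℝ (Fin p) =>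
          Real.exp ((g y + (inner ℝ (mv M x) y : ℝ)) / ε) :=
        Real.continuous_exp.comp ((continuous_const.add
          ((mv_cont M).inner continuous_const)).div_const ε)
      exact this.continuousAt
  · rw [continuous_iff_continuousAt]
    intro x₀
    apply continuousAt_of_dominated (bound := fun _ =>
      Real.exp ((max G 0 + cM * ((‖x₀‖ + 1) * R)) / ε) * R)
    · exact Eventually.of_forall fun x =>
        ((integrand_cont ε hg M x).smul continuous_id).aestronglyMeasurable
    · filter_upwards [key x₀] with x hx
      filter_upwards [hx, haeY] with y hy hyY
      rw [norm_smul, Real.norm_eq_abs, abs_of_pos (Real.exp_pos _)]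
      exact mul_le_mul hy (hR y hyY) (norm_nonneg _) (Real.exp_pos _).le
    · exact integrable_const _
    · refine ae_of_all _ fun y => ?_
      have : Continuous fun x : EuclideanSpace ℝ (Fin p) =>
          Real.exp ((g y + (inner ℝ (mv M x) y : ℝ)) / ε) • y :=
        (Real.continuous_exp.comp ((continuous_const.add
          ((mv_cont M).inner continuous_const)).div_const ε)).smul continuous_const
      exact this.continuousAt

lemma bary_cont {p q : ℕ} {Y : Set (EuclideanSpace ℝ (Fin q))} (hY : IsCompact Y)
    {ε : ℝ} (hε : 0 < ε) {g : EuclideanSpace ℝ (Fin q) → ℝ} (hg : Continuous g)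
    (M : Matrix (Fin q) (Fin p) ℝ) (κ : Measure (EuclideanSpace ℝ (Fin q)))
    [IsFiniteMeasure κ] (hκne : κ ≠ 0) (hκsupp : κ Yᶜ = 0) :
    Continuous (baryMap ε g M κ) := by
  obtain ⟨h1, h2⟩ := cont_denom hY hε hg M κ hκsupp
  exact (h1.inv₀ fun x => (denom_pos hY ε hg M κ hκne hκsupp x).ne').smul h2

lemma key_scalar {n : ℕ} {Y : Set (EuclideanSpace ℝ (Fin n))} (hY : IsCompact Y)
    (βs : ℕ → Measure (EuclideanSpace ℝ (Fin n))) (β : Measure (EuclideanSpace ℝ (Fin n)))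
    [∀ h, IsFiniteMeasure (βs h)] [IsFiniteMeasure β]
    (hβssupp : ∀ h, βs h Yᶜ = 0) (hβsupp : β Yᶜ = 0)
    (hweak : ∀ f : BoundedContinuousFunction (EuclideanSpace ℝ (Fin n)) ℝ,
      Tendsto (fun h => ∫ y, f y ∂(βs h)) atTop (nhds (∫ y, f y ∂β)))
    {fs : ℕ → EuclideanSpace ℝ (Fin n) → ℝ} {f : EuclideanSpace ℝ (Fin n) → ℝ}
    (hfs : ∀ h, Continuous (fs h)) (hf : Continuous f)
    (hu : TendstoUniformlyOn fs f atTop Y) :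
    Tendsto (fun h => ∫ y, fs h y ∂(βs h)) atTop (nhds (∫ y, f y ∂β)) := by
  obtain ⟨C₀, hC₀⟩ := hY.exists_bound_of_continuousOn hf.continuousOn
  set C : ℝ := max C₀ 0 with hCdef
  have hC0 : 0 ≤ C := le_max_right _ _
  have hC : ∀ y ∈ Y, |f y| ≤ C := fun y hy => le_trans (hC₀ y hy) (le_max_left _ _)
  set Fc : EuclideanSpace ℝ (Fin n) → ℝ := fun y => max (-C) (min (f y) C) with hFcdef
  have hFc_cont : Continuous Fc := continuous_const.max (hf.min continuous_const)
  have hFc_bd : ∀ y, ‖Fc y‖ ≤ C := by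
    intro y
    rw [Real.norm_eq_abs, abs_le]
    exact ⟨le_max_left _ _, max_le (by linarith) (min_le_right _ _)⟩
  have hFc_eq : ∀ y ∈ Y, Fc y = f y := by
    intro y hy
    have := abs_le.1 (hC y hy)
    rw [hFcdef]
    simp only
    rw [min_eq_left this.2, max_eq_right this.1]
  set F : BoundedContinuousFunction (EuclideanSpace ℝ (Fin n)) ℝ :=
    BoundedContinuousFunction.ofNormedAddCommGroup Fc hFc_cont C hFc_bd with hFdef
  have hFcoe : ∀ y, F y = Fc y := fun _ => rfl
  have haeβ : ∀ᵐ y ∂β, y ∈ Y := mem_ae_iff.mpr hβsupp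
  have haeβs : ∀ h, ∀ᵐ y ∂(βs h), y ∈ Y := fun h => mem_ae_iff.mpr (hβssupp h)
  have hFβ : ∫ y, Fc y ∂β = ∫ y, f y ∂β := by
    refine integral_congr_ae ?_
    filter_upwards [haeβ] with y hy using hFc_eq y hy
  have h1 : Tendsto (fun h => ∫ y, Fc y ∂(βs h)) atTop (nhds (∫ y, f y ∂β)) := by
    rw [← hFβ]
    simpa only [hFcoe] using hweak F
  have hmass : Tendsto (fun h => ((βs h) univ).toReal) atTop (nhds ((β univ).toReal)) := by
    have := hweak 1
    simpa [integral_const, measureReal_def] using this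
  set K : ℝ := (β univ).toReal + 1 with hKdef
  have hK0 : 0 < K := by positivity
  have hKev : ∀ᶠ h in atTop, ((βs h) univ).toReal ≤ K :=
    hmass.eventually_le_const (lt_add_one _)
  have hdiff : Tendsto (fun h => ∫ y, fs h y ∂(βs h) - ∫ y, Fc y ∂(βs h)) atTop (nhds 0) := by
    rw [NormedAddCommGroup.tendsto_nhds_zero]
    intro δ hδ
    have hδ' : 0 < δ / (2 * K) := by positivity
    filter_upwards [Metric.tendstoUniformlyOn_iff.mp hu _ hδ', hKev] with h hclose hmassh
    have hint1 : Integrable (fs h) (βs h) := integrable_of_cpt hY _ (hβssupp h) (hfs h)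
    have hint2 : Integrable Fc (βs h) := integrable_of_cpt hY _ (hβssupp h) hFc_cont
    rw [← integral_sub hint1 hint2]
    have hb : ∀ᵐ y ∂(βs h), ‖fs h y - Fc y‖ ≤ δ / (2 * K) := by
      filter_upwards [haeβs h] with y hy
      rw [hFc_eq y hy, Real.norm_eq_abs]
      have := hclose y hy
      rw [Real.dist_eq, abs_sub_comm] at this
      exact this.le
    calc ‖∫ y, (fs h y - Fc y) ∂(βs h)‖ ≤ (δ / (2 * K)) * ((βs h) univ).toReal :=
          norm_integral_le_of_norm_le_const hb
      _ ≤ (δ / (2 * K)) * K := by gcongr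
      _ = δ / 2 := by field_simp
      _ < δ := by linarith
  have := hdiff.add h1
  simpa using this

lemma key_vec {n : ℕ} {Y : Set (EuclideanSpace ℝ (Fin n))} (hY : IsCompact Y)
    (βs : ℕ → Measure (EuclideanSpace ℝ (Fin n))) (β : Measure (EuclideanSpace ℝ (Fin n)))
    [∀ h, IsFiniteMeasure (βs h)] [IsFiniteMeasure β]
    (hβssupp : ∀ h, βs h Yᶜ = 0) (hβsupp : β Yᶜ = 0)
    (hweak : ∀ f : BoundedContinuousFunction (EuclideanSpace ℝ (Fin n)) ℝ,
      Tendsto (fun h => ∫ y, f y ∂(βs h)) atTop (nhds (∫ y, f y ∂β)))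
    {fs : ℕ → EuclideanSpace ℝ (Fin n) → ℝ} {f : EuclideanSpace ℝ (Fin n) → ℝ}
    (hfs : ∀ h, Continuous (fs h)) (hf : Continuous f)
    (hu : TendstoUniformlyOn fs f atTop Y) :
    Tendsto (fun h => ∫ y, fs h y • y ∂(βs h)) atTop (nhds (∫ y, f y • y ∂β)) := by
  obtain ⟨R, hR0, hR⟩ := norm_bound_on_cpt hY
  apply tendsto_euclid
  intro i
  have hproj : ∀ (κ : Measure (EuclideanSpace ℝ (Fin n))) [IsFiniteMeasure κ],
      κ Yᶜ = 0 → ∀ {φ : EuclideanSpace ℝ (Fin n) → ℝ}, Continuous φ →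
      (∫ y, φ y • y ∂κ) i = ∫ y, φ y * y i ∂κ := by
    intro κ _ hκ φ hφ
    have hint : Integrable (fun y => φ y • y) κ :=
      integrable_of_cpt hY κ hκ (hφ.smul continuous_id)
    have := (EuclideanSpace.proj (𝕜 := ℝ) i).integral_comp_comm hint
    have h2 : ∀ y : EuclideanSpace ℝ (Fin n),
        (EuclideanSpace.proj (𝕜 := ℝ) i) (φ y • y) = φ y * y i := by
      intro y; simp [smul_eq_mul]
    calc (∫ y, φ y • y ∂κ) i = (EuclideanSpace.proj (𝕜 := ℝ) i) (∫ y, φ y • y ∂κ) := rfl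
      _ = ∫ y, (EuclideanSpace.proj (𝕜 := ℝ) i) (φ y • y) ∂κ := this.symm
      _ = ∫ y, φ y * y i ∂κ := integral_congr_ae (ae_of_all _ h2)
  have hcont_i : Continuous fun y : EuclideanSpace ℝ (Fin n) => y i :=
    (EuclideanSpace.proj (𝕜 := ℝ) i).continuous
  have e1 : ∀ h, (∫ y, fs h y • y ∂(βs h)) i = ∫ y, fs h y * y i ∂(βs h) :=
    fun h => hproj (βs h) (hβssupp h) (hfs h)
  have e2 : (∫ y, f y • y ∂β) i = ∫ y, f y * y i ∂β := hproj β hβsupp hf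
  simp only [e1, e2]
  apply key_scalar hY βs β hβssupp hβsupp hweak
    (fun h => (hfs h).mul hcont_i) (hf.mul hcont_i)
  rw [Metric.tendstoUniformlyOn_iff]
  intro δ hδ
  have hδ' : 0 < δ / (R + 1) := by positivity
  filter_upwards [Metric.tendstoUniformlyOn_iff.mp hu _ hδ'] with h hclose y hy
  have h1 := hclose y hy
  rw [Real.dist_eq] at h1 ⊢
  have h2 : |f y * y i - fs h y * y i| = |f y - fs h y| * |y i| := by
    rw [← abs_mul]; ring_nf
  simp only [Pi.mul_apply]; rw [h2]
  have h3 : |y i| ≤ R := le_trans (euclid_coord_le y i) (hR y hy)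
  calc |f y - fs h y| * |y i| ≤ (δ / (R + 1)) * R := by
        apply mul_le_mul h1.le h3 (abs_nonneg _) hδ'.le
    _ < δ := by rw [div_mul_eq_mul_div, div_lt_iff₀ (by linarith)]; nlinarith

lemma exp_lip {a b K : ℝ} (ha : a ≤ K) (hb : b ≤ K) :
    |Real.exp a - Real.exp b| ≤ Real.exp K * |a - b| := by
  have key : ∀ c d : ℝ, c ≤ d → d ≤ K → Real.exp d - Real.exp c ≤ Real.exp K * (d - c) := by
    intro c d hcd hdK
    have h1 := Real.add_one_le_exp (c - d)
    have h2 : Real.exp c = Real.exp d * Real.exp (c - d) := by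
      rw [← Real.exp_add]; ring_nf
    have h3 : Real.exp d ≤ Real.exp K := Real.exp_le_exp.mpr hdK
    have h4 : 0 < Real.exp d := Real.exp_pos d
    nlinarith
  rcases le_total a b with hab | hab
  · rw [abs_sub_comm,
      abs_of_nonneg (by linarith [Real.exp_le_exp.mpr hab] : (0:ℝ) ≤ Real.exp b - Real.exp a),
      abs_sub_comm, abs_of_nonneg (by linarith : (0:ℝ) ≤ b - a)]
    exact key a b hab hb
  · rw [abs_of_nonneg (by linarith [Real.exp_le_exp.mpr hab] : (0:ℝ) ≤ Real.exp a - Real.exp b),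
      abs_of_nonneg (by linarith : (0:ℝ) ≤ a - b)]
    exact key b a hab ha

lemma unif_exp {n : ℕ} {Y : Set (EuclideanSpace ℝ (Fin n))} (hY : IsCompact Y)
    {us : ℕ → EuclideanSpace ℝ (Fin n) → ℝ} {u : EuclideanSpace ℝ (Fin n) → ℝ}
    (hu_cont : Continuous u)
    (huu : TendstoUniformlyOn us u atTop Y) :
    TendstoUniformlyOn (fun h y => Real.exp (us h y)) (fun y => Real.exp (u y)) atTop Y := by
  obtain ⟨K₁, hK₁⟩ := hY.exists_bound_of_continuousOn hu_cont.continuousOn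
  set K := K₁ + 1 with hK
  have hbd : ∀ᶠ h in atTop, ∀ y ∈ Y, us h y ≤ K ∧ u y ≤ K := by
    filter_upwards [Metric.tendstoUniformlyOn_iff.mp huu 1 one_pos] with h hclose y hy
    have h1 := hclose y hy
    rw [Real.dist_eq] at h1
    have h2 : |u y| ≤ K₁ := by simpa [Real.norm_eq_abs] using hK₁ y hy
    have := abs_le.1 h2
    constructor
    · have := abs_lt.1 h1; linarith
    · linarith
  rw [Metric.tendstoUniformlyOn_iff]
  intro δ hδ
  have hδ' : 0 < δ / (2 * Real.exp K) := by positivity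
  filter_upwards [hbd, Metric.tendstoUniformlyOn_iff.mp huu _ hδ'] with h hb hclose y hy
  obtain ⟨hb1, hb2⟩ := hb y hy
  have h1 := hclose y hy
  rw [Real.dist_eq] at h1 ⊢
  calc |Real.exp (u y) - Real.exp (us h y)| ≤ Real.exp K * |u y - us h y| :=
        exp_lip hb2 hb1
    _ ≤ Real.exp K * (δ / (2 * Real.exp K)) :=
        mul_le_mul_of_nonneg_left h1.le (Real.exp_pos _).le
    _ = δ / 2 := by field_simp
    _ < δ := by linarith

/-- **Stability of entropic barycentric maps.** If `β_h ⇀ β` weakly, `g_h → g` uniformly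
on `Y`, `M_h → M` entrywise, then the barycentric maps converge pointwise on `X`, are
uniformly bounded by `max_{y∈Y} ‖y‖`, and hence converge in `L²(μ;ℝ^q)` for every finite
positive measure `μ` on `X`. -/
theorem stmt14 {p q : ℕ}
    (X : Set (EuclideanSpace ℝ (Fin p))) (Y : Set (EuclideanSpace ℝ (Fin q)))
    (hX : IsCompact X) (hY : IsCompact Y)
    (ε : ℝ) (hε : 0 < ε)
    (βs : ℕ → Measure (EuclideanSpace ℝ (Fin q)))
    (β : Measure (EuclideanSpace ℝ (Fin q)))
    (hβsfin : ∀ h, IsFiniteMeasure (βs h)) [IsFiniteMeasure β]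
    (hβsne : ∀ h, βs h ≠ 0) (hβne : β ≠ 0)
    (hβssupp : ∀ h, βs h Yᶜ = 0) (hβsupp : β Yᶜ = 0)
    (hweak : ∀ f : BoundedContinuousFunction (EuclideanSpace ℝ (Fin q)) ℝ,
      Filter.Tendsto (fun h => ∫ y, f y ∂(βs h)) Filter.atTop (nhds (∫ y, f y ∂β)))
    (gs : ℕ → EuclideanSpace ℝ (Fin q) → ℝ) (g : EuclideanSpace ℝ (Fin q) → ℝ)
    (hgs_cont : ∀ h, Continuous (gs h)) (hg_cont : Continuous g)
    (hg_unif : TendstoUniformlyOn gs g Filter.atTop Y)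
    (Ms : ℕ → Matrix (Fin q) (Fin p) ℝ) (M : Matrix (Fin q) (Fin p) ℝ)
    (hM : ∀ i j, Filter.Tendsto (fun h => Ms h i j) Filter.atTop (nhds (M i j))) :
    (∀ x ∈ X, Filter.Tendsto (fun h => baryMap ε (gs h) (Ms h) (βs h) x) Filter.atTop
        (nhds (baryMap ε g M β x))) ∧
    (∀ (h : ℕ) (x : EuclideanSpace ℝ (Fin p)),
      ‖baryMap ε (gs h) (Ms h) (βs h) x‖ ≤ sSup ((fun y => ‖y‖) '' Y)) ∧
    (∀ μ : Measure (EuclideanSpace ℝ (Fin p)), IsFiniteMeasure μ → μ Xᶜ = 0 →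
      Filter.Tendsto
        (fun h => ∫ x, ‖baryMap ε (gs h) (Ms h) (βs h) x - baryMap ε g M β x‖ ^ 2 ∂μ)
        Filter.atTop (nhds 0)) := by
  haveI : ∀ h, IsFiniteMeasure (βs h) := hβsfin
  obtain ⟨R, hR0, hR⟩ := norm_bound_on_cpt hY
  -- pointwise convergence (for every x)
  have hpt : ∀ x : EuclideanSpace ℝ (Fin p),
      Tendsto (fun h => baryMap ε (gs h) (Ms h) (βs h) x) atTop
        (nhds (baryMap ε g M β x)) := by
    intro x
    set fs : ℕ → EuclideanSpace ℝ (Fin q) → ℝ :=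
      fun h y => Real.exp ((gs h y + (inner ℝ (mv (Ms h) x) y : ℝ)) / ε) with hfsdef
    set f : EuclideanSpace ℝ (Fin q) → ℝ :=
      fun y => Real.exp ((g y + (inner ℝ (mv M x) y : ℝ)) / ε) with hfdef
    have hf_cont : Continuous f := integrand_cont ε hg_cont M x
    have hfs_cont : ∀ h, Continuous (fs h) := fun h => integrand_cont ε (hgs_cont h) (Ms h) x
    have hmv : Tendsto (fun h => mv (Ms h) x) atTop (nhds (mv M x)) := by
      apply tendsto_euclid
      intro i
      show Tendsto (fun h => ∑ j, Ms h i j * x j) atTop (nhds (∑ j, M i j * x j))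
      exact tendsto_finset_sum _ fun j _ => (hM i j).mul tendsto_const_nhds
    have hexp_unif : TendstoUniformlyOn
        (fun h y => (gs h y + (inner ℝ (mv (Ms h) x) y : ℝ)) / ε)
        (fun y => (g y + (inner ℝ (mv M x) y : ℝ)) / ε) atTop Y := by
      rw [Metric.tendstoUniformlyOn_iff]
      intro δ hδ
      have hδ1 : 0 < δ * ε / 2 := by positivity
      have hδ2 : 0 < δ * ε / (2 * (R + 1)) := by positivity
      have hmv' : ∀ᶠ h in atTop, ‖mv (Ms h) x - mv M x‖ < δ * ε / (2 * (R + 1)) :=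
        NormedAddCommGroup.tendsto_nhds_zero.mp (tendsto_sub_nhds_zero_iff.mpr hmv) _ hδ2
      filter_upwards [Metric.tendstoUniformlyOn_iff.mp hg_unif _ hδ1, hmv'] with h h1 h2 y hy
      rw [Real.dist_eq]
      have e1 : |g y - gs h y| < δ * ε / 2 := by
        have := h1 y hy; rwa [Real.dist_eq] at this
      have e2 : |(inner ℝ (mv M x) y : ℝ) - (inner ℝ (mv (Ms h) x) y : ℝ)|
          ≤ δ * ε / (2 * (R + 1)) * R := by
        rw [← inner_sub_left]
        refine le_trans (abs_real_inner_le_norm _ _) ?_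
        refine mul_le_mul ?_ (hR y hy) (norm_nonneg _) hδ2.le
        calc ‖mv M x - mv (Ms h) x‖ = ‖mv (Ms h) x - mv M x‖ := norm_sub_rev _ _
          _ ≤ δ * ε / (2 * (R + 1)) := h2.le
      have e3 : δ * ε / (2 * (R + 1)) * R < δ * ε / 2 := by
        rw [div_mul_eq_mul_div, div_lt_div_iff₀ (by linarith) (by linarith)]
        nlinarith
      have e4 : |(g y + (inner ℝ (mv M x) y : ℝ)) - (gs h y + (inner ℝ (mv (Ms h) x) y : ℝ))|
          ≤ |g y - gs h y| + |(inner ℝ (mv M x) y : ℝ) - (inner ℝ (mv (Ms h) x) y : ℝ)| := by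
        have : (g y + (inner ℝ (mv M x) y : ℝ)) - (gs h y + (inner ℝ (mv (Ms h) x) y : ℝ))
            = (g y - gs h y) + ((inner ℝ (mv M x) y : ℝ) - (inner ℝ (mv (Ms h) x) y : ℝ)) := by ring
        rw [this]; exact abs_add_le _ _
      rw [div_sub_div_same, abs_div, abs_of_pos hε, div_lt_iff₀ hε]
      calc |(g y + (inner ℝ (mv M x) y : ℝ)) - (gs h y + (inner ℝ (mv (Ms h) x) y : ℝ))|
          ≤ |g y - gs h y|
            + |(inner ℝ (mv M x) y : ℝ) - (inner ℝ (mv (Ms h) x) y : ℝ)| := e4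
        _ < δ * ε / 2 + δ * ε / 2 := by
            have := lt_of_le_of_lt e2 e3
            linarith
        _ = δ * ε := by ring
    have hfu : TendstoUniformlyOn fs f atTop Y :=
      unif_exp hY ((hg_cont.add (continuous_const.inner continuous_id)).div_const ε) hexp_unif
    have hd := key_scalar hY βs β hβssupp hβsupp hweak hfs_cont hf_cont hfu
    have hN := key_vec hY βs β hβssupp hβsupp hweak hfs_cont hf_cont hfu
    have hdpos := denom_pos hY ε hg_cont M β hβne hβsupp x
    exact (hd.inv₀ hdpos.ne').smul hN
  refine ⟨fun x _ => hpt x,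
    fun h x => bary_bound hY ε (hgs_cont h) (Ms h) (βs h) (hβsne h) (hβssupp h) x, ?_⟩
  intro μ hμfin hμsupp
  haveI := hμfin
  set Rb := sSup ((fun y => ‖y‖) '' Y) with hRbdef
  have hYne : Y.Nonempty := by
    by_contra hn
    rw [not_nonempty_iff_eq_empty] at hn
    subst hn
    simp only [compl_empty] at hβsupp
    exact hβne (Measure.measure_univ_eq_zero.mp hβsupp)
  obtain ⟨y₀, hy₀⟩ := hYne
  have hRb0 : 0 ≤ Rb :=
    le_trans (norm_nonneg y₀) (le_csSup (hY.image continuous_norm).bddAbove ⟨y₀, hy₀, rfl⟩)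
  have hcontT : Continuous (baryMap ε g M β) := bary_cont hY hε hg_cont M β hβne hβsupp
  have hcontTh : ∀ h, Continuous (baryMap ε (gs h) (Ms h) (βs h)) :=
    fun h => bary_cont hY hε (hgs_cont h) (Ms h) (βs h) (hβsne h) (hβssupp h)
  have main : Tendsto
      (fun h => ∫ x, ‖baryMap ε (gs h) (Ms h) (βs h) x - baryMap ε g M β x‖ ^ 2 ∂μ)
      atTop (nhds (∫ _x, (0:ℝ) ∂μ)) := by
    apply tendsto_integral_of_dominated_convergence (bound := fun _ => (2 * Rb) ^ 2)
    · intro h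
      exact (((hcontTh h).sub hcontT).norm.pow 2).aestronglyMeasurable
    · exact integrable_const _
    · intro h
      refine ae_of_all _ fun x => ?_
      rw [Real.norm_eq_abs, abs_of_nonneg (by positivity)]
      have hb1 := bary_bound hY ε (hgs_cont h) (Ms h) (βs h) (hβsne h) (hβssupp h) x
      have hb2 := bary_bound hY ε hg_cont M β hβne hβsupp x
      have h1 : ‖baryMap ε (gs h) (Ms h) (βs h) x - baryMap ε g M β x‖ ≤ 2 * Rb := by
        refine le_trans (norm_sub_le _ _) ?_
        rw [← hRbdef] at hb1 hb2
        linarith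
      exact pow_le_pow_left₀ (norm_nonneg _) h1 2
    · refine ae_of_all _ fun x => ?_
      have hT := hpt x
      have hc : Continuous fun v : EuclideanSpace ℝ (Fin q) =>
          ‖v - baryMap ε g M β x‖ ^ 2 :=
        (continuous_id.sub continuous_const).norm.pow 2
      have := (hc.tendsto _).comp hT
      simpa [Function.comp_def] using this
  simpa using main
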